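/- arXiv:2509.10121 — 3 statements merged into one kernel-verified Lean document; each statement's English description precedes it below -/
import Mathlib

section
/- Let g be an analytic formal deformation of dimension n with associated algebras N_s and N := N_0. If for every real ε > 0 there exists a real s with 0 < s < ε such that N_s is defined and is a semisimple ring, then there exists a finite-dimensional semisimple ℂ-algebra A' with dim_ℂ A' = n such that the deformation is strongly flat from N to A'. -/
open scoped BigOperators

/-- The structure-constant power series `g i j l` specialised (analytically) at `t = s`. -/
noncomputable def fconst {n : ℕ} (g : Fin n → Fin n → Fin n → PowerSeries ℂ) (s : ℝ) :
    Fin n → Fin n → Fin n → ℂ :=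
  fun i j l => ∑' m : ℕ, (PowerSeries.coeff m) (g i j l) * (s : ℂ) ^ m

/-- An analytic formal deformation of dimension `n`: structure constants `g i j l ∈ ℂ⟦t⟧`
with geometrically bounded coefficients, satisfying the associativity law and possessing
a unit vector `u`. -/
structure AnalyticDeformation (n : ℕ) where
  g : Fin n → Fin n → Fin n → PowerSeries ℂ
  u : Fin n → ℂ
  conv : ∀ i j l, ∃ C r : ℝ, 0 < C ∧ 0 < r ∧
    ∀ m : ℕ, ‖(PowerSeries.coeff m) (g i j l)‖ ≤ C * r ^ m
  assoc : ∀ i j k m, ∑ l, g i j l * g l k m = ∑ l, g j k l * g i l m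
  unit_left : ∀ j l, ∑ i, u i • g i j l = if j = l then (1 : PowerSeries ℂ) else 0
  unit_right : ∀ j l, ∑ i, u i • g j i l = if j = l then (1 : PowerSeries ℂ) else 0

/-- `N_s` is defined: all the structure-constant series converge at `t = s`. -/
def AnalyticDeformation.DefinedAt {n : ℕ} (D : AnalyticDeformation n) (s : ℝ) : Prop :=
  ∀ i j l, Summable (fun m : ℕ => (PowerSeries.coeff m) (D.g i j l) * (s : ℂ) ^ m)

/-- A unital associative `R`-algebra `B` realizes the structure constants `c` if it has a
basis multiplying according to `c`; this expresses `B` being (isomorphic to) the algebra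
with underlying space `Fin n → R`, multiplication `(x*y) l = ∑ i j, x i * y j * c i j l`. -/
def RealizesAlgebra {n : ℕ} (R : Type*) [CommRing R] (c : Fin n → Fin n → Fin n → R)
    (B : Type*) [Ring B] [Algebra R B] : Prop :=
  ∃ e : Module.Basis (Fin n) R B, ∀ i j, e i * e j = ∑ l, c i j l • e l

/-- `N_s` is defined and isomorphic to `A` as a `ℂ`-algebra. -/
def AnalyticDeformation.IsoAt {n : ℕ} (D : AnalyticDeformation n) (s : ℝ)
    (A : Type*) [Ring A] [Algebra ℂ A] : Prop :=
  D.DefinedAt s ∧ RealizesAlgebra ℂ (fconst D.g s) A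

/-- The deformation is strongly flat from `N = N_0` to `A`. -/
def AnalyticDeformation.StronglyFlat {n : ℕ} (D : AnalyticDeformation n)
    (A : Type*) [Ring A] [Algebra ℂ A] : Prop :=
  ∀ ε : ℝ, 0 < ε → ∃ s : ℝ, 0 < s ∧ s < ε ∧ D.IsoAt s A


open Module
open scoped Classical DirectSum

section Schur

variable {A : Type*} [Ring A] [Algebra ℂ A] [FiniteDimensional ℂ A]

lemma fd_homA (V W : Submodule A A) : FiniteDimensional ℂ (↥V →ₗ[A] ↥W) :=
  FiniteDimensional.of_injective
    (LinearMap.restrictScalarsₗ ℂ A ↥V ↥W ℂ) (LinearMap.restrictScalars_injective ℂ)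

lemma end_finrank_one (V : Submodule A A) [IsSimpleModule A ↥V] :
    finrank ℂ (↥V →ₗ[A] ↥V) = 1 := by
  have : Nontrivial ↥V := IsSimpleModule.nontrivial A ↥V
  have key : ∀ φ : ↥V →ₗ[A] ↥V, ∃ c : ℂ, φ = c • (LinearMap.id : ↥V →ₗ[A] ↥V) := by
    intro φ
    obtain ⟨c, hc⟩ := Module.End.exists_eigenvalue (φ.restrictScalars ℂ)
    obtain ⟨v, hv⟩ := hc.exists_hasEigenvector
    refine ⟨c, ?_⟩
    set ψ : ↥V →ₗ[A] ↥V := φ - c • (LinearMap.id : ↥V →ₗ[A] ↥V) with hψ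
    have h0 : ψ v = 0 := by
      have h1 := hv.apply_eq_smul
      simp only [hψ, LinearMap.sub_apply, LinearMap.smul_apply, LinearMap.id_apply]
      rw [show φ v = (φ.restrictScalars ℂ) v from rfl, h1, sub_self]
    rcases ψ.injective_or_eq_zero with h | h
    · exact absurd (h (by simpa using h0)) hv.2
    · exact sub_eq_zero.mp h
  obtain ⟨v, hv⟩ := exists_ne (0 : ↥V)
  refine finrank_eq_one (LinearMap.id : ↥V →ₗ[A] ↥V) ?_ ?_
  · intro h
    exact hv (by simpa using DFunLike.congr_fun h v)
  · intro w
    obtain ⟨c, hc⟩ := key w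
    exact ⟨c, hc.symm⟩

lemma hom_finrank (V W : Submodule A A) [IsSimpleModule A ↥V] [IsSimpleModule A ↥W] :
    finrank ℂ (↥V →ₗ[A] ↥W) = if Nonempty (↥V ≃ₗ[A] ↥W) then 1 else 0 := by
  split_ifs with h
  · obtain ⟨e⟩ := h
    rw [(LinearEquiv.congrLeft (M := ↥W) ℂ e).finrank_eq]
    exact end_finrank_one W
  · have : Subsingleton (↥V →ₗ[A] ↥W) := by
      constructor
      intro f g
      have hf : f = 0 := by
        by_contra hf
        exact h ⟨LinearEquiv.ofBijective f (f.bijective_of_ne_zero hf)⟩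
      have hg : g = 0 := by
        by_contra hg
        exact h ⟨LinearEquiv.ofBijective g (g.bijective_of_ne_zero hg)⟩
      rw [hf, hg]
    exact finrank_zero_of_subsingleton

end Schur

set_option maxHeartbeats 1000000 in
theorem wedderburn_lite (n : ℕ) (A : Type*) [Ring A] [Algebra ℂ A] [IsSemisimpleRing A]
    [FiniteDimensional ℂ A] (hA : finrank ℂ A = n) :
    ∃ (k : ℕ) (d : Fin k → ℕ), k ≤ n ∧ (∀ i, d i ≤ n) ∧
      Nonempty (A ≃ₐ[ℂ] ∀ i : Fin k, Matrix (Fin (d i)) (Fin (d i)) ℂ) := by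
  classical
  have hNoeth : IsNoetherian A A := isNoetherian_of_tower ℂ inferInstance
  obtain ⟨s, hsfin, hsind, hstop, hsimple⟩ :=
    ((IsSemisimpleModule.finite_tfae (R := A) (M := A)).out 1 4).mp hNoeth
  haveI := hsfin.fintype
  haveI : ∀ i : ↥s, IsSimpleModule A ↥(i : Submodule A A) := fun i => hsimple i.1 i.2
  -- internal direct sum decomposition of A
  have hind : iSupIndep ((↑) : ↥s → Submodule A A) := (sSupIndep_iff s).mp hsind
  have htop : ⨆ i : ↥s, (i : Submodule A A) = ⊤ := by
    rw [← sSup_eq_iSup']; exact hstop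
  have hI : DirectSum.IsInternal (fun i : ↥s => (i : Submodule A A)) :=
    DirectSum.isInternal_submodule_of_iSupIndep_of_iSup_eq_top hind htop
  let e1 : (⨁ i : ↥s, ↥(i : Submodule A A)) ≃ₗ[A] A :=
    LinearEquiv.ofBijective (DirectSum.coeLinearMap _) hI
  let eA : A ≃ₗ[A] ∀ i : ↥s, ↥(i : Submodule A A) :=
    e1.symm.trans (DirectSum.linearEquivFunOnFintype A ↥s _)
  -- finrank decomposition
  have hsum : ∑ i : ↥s, finrank ℂ ↥(i : Submodule A A) = n := by
    rw [← Module.finrank_pi_fintype ℂ, ← (eA.restrictScalars ℂ).finrank_eq, hA]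
  -- quotient by isomorphism classes
  have requiv : Equivalence (fun i j : ↥s =>
      Nonempty (↥(i : Submodule A A) ≃ₗ[A] ↥(j : Submodule A A))) := by
    refine ⟨fun _ => ⟨LinearEquiv.refl _ _⟩, fun h => ?_, fun h1 h2 => ?_⟩
    · obtain ⟨e⟩ := h; exact ⟨e.symm⟩
    · obtain ⟨e⟩ := h1; obtain ⟨f⟩ := h2; exact ⟨e.trans f⟩
  let r : Setoid ↥s :=
    ⟨fun i j => Nonempty (↥(i : Submodule A A) ≃ₗ[A] ↥(j : Submodule A A)), requiv⟩
  let Q := Quotient r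
  haveI : Fintype Q := Fintype.ofFinite Q
  let V : Q → Submodule A A := fun c => (Quotient.out c : ↥s)
  haveI : ∀ c : Q, IsSimpleModule A ↥(V c) := fun c => hsimple _ (Quotient.out c).2
  let d : Q → ℕ := fun c => finrank ℂ ↥(V c)
  -- each i is isomorphic to its class representative
  have eRep : ∀ i : ↥s, Nonempty (↥(i : Submodule A A) ≃ₗ[A] ↥(V ⟦i⟧)) := fun i =>
    Quotient.exact (Quotient.out_eq (⟦i⟧ : Q)).symm
  have iso_iff : ∀ (i : ↥s) (c : Q),
      Nonempty (↥(i : Submodule A A) ≃ₗ[A] ↥(V c)) ↔ (⟦i⟧ : Q) = c := by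
    intro i c
    constructor
    · intro ⟨e⟩
      have : (⟦i⟧ : Q) = ⟦Quotient.out c⟧ := Quotient.sound ⟨e⟩
      rwa [Quotient.out_eq] at this
    · rintro rfl
      exact eRep i
  -- multiplicity = dimension
  -- finite dimensionality of hom spaces
  haveI : ∀ (X Y : Submodule A A), FiniteDimensional ℂ (↥X →ₗ[A] ↥Y) := fun X Y => fd_homA X Y
  -- multiplicity equals dimension
  have mult_eq : ∀ c : Q, (Finset.univ.filter (fun i : ↥s => (⟦i⟧ : Q) = c)).card = d c := by
    intro c
    have h1 : finrank ℂ (A →ₗ[A] ↥(V c)) = d c :=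
      (LinearMap.ringLmapEquivSelf A ℂ ↥(V c)).finrank_eq
    have h2 : finrank ℂ (A →ₗ[A] ↥(V c)) =
        ∑ i : ↥s, finrank ℂ (↥(i : Submodule A A) →ₗ[A] ↥(V c)) := by
      have e2 : (∀ i : ↥s, (↥(i : Submodule A A) →ₗ[A] ↥(V c))) ≃ₗ[ℂ]
          ((∀ i : ↥s, ↥(i : Submodule A A)) →ₗ[A] ↥(V c)) :=
        LinearMap.lsum A (fun i : ↥s => ↥(i : Submodule A A)) ℂ
      rw [(LinearEquiv.congrLeft (M := ↥(V c)) ℂ eA).finrank_eq, ← e2.finrank_eq,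
        Module.finrank_pi_fintype ℂ]
    have h3 : ∀ i : ↥s, finrank ℂ (↥(i : Submodule A A) →ₗ[A] ↥(V c)) =
        if (⟦i⟧ : Q) = c then 1 else 0 := by
      intro i
      rw [hom_finrank]
      simp only [iso_iff i c]
    rw [Finset.card_filter, ← h1, h2]
    exact (Finset.sum_congr rfl fun i _ => h3 i).symm
  haveI : ∀ c : Q, Nontrivial ↥(V c) := fun c => IsSimpleModule.nontrivial A ↥(V c)
  have dpos : ∀ c : Q, 1 ≤ d c := fun c => Module.finrank_pos
  -- total dimension count
  have total : ∑ c : Q, d c * d c = n := by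
    have hfib : ∑ c : Q, ∑ i ∈ Finset.univ.filter (fun i : ↥s => (⟦i⟧ : Q) = c),
        finrank ℂ ↥(i : Submodule A A) = ∑ i : ↥s, finrank ℂ ↥(i : Submodule A A) := by
      rw [Finset.sum_fiberwise_eq_sum_filter]
      simp
    rw [← hsum, ← hfib]
    refine Finset.sum_congr rfl fun c _ => ?_
    have hcongr : ∀ i ∈ Finset.univ.filter (fun i : ↥s => (⟦i⟧ : Q) = c),
        finrank ℂ ↥(i : Submodule A A) = d c := by
      intro i hi
      obtain ⟨e⟩ := (iso_iff i c).mpr (Finset.mem_filter.mp hi).2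
      exact (e.restrictScalars ℂ).finrank_eq
    rw [Finset.sum_congr rfl hcongr, Finset.sum_const, smul_eq_mul, mult_eq c]
  have dle : ∀ c : Q, d c ≤ n := by
    intro c
    calc d c ≤ d c * d c := Nat.le_mul_of_pos_right _ (dpos c)
    _ ≤ ∑ c' : Q, d c' * d c' := Finset.single_le_sum (f := fun c' => d c' * d c')
        (fun _ _ => Nat.zero_le _) (Finset.mem_univ c)
    _ = n := total
  have hk : Fintype.card Q ≤ n := by
    calc Fintype.card Q = ∑ _c : Q, 1 := by simp
    _ ≤ ∑ c : Q, d c * d c := Finset.sum_le_sum fun c _ =>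
        le_trans (dpos c) (Nat.le_mul_of_pos_right _ (dpos c))
    _ = n := total
  -- the algebra map into the product of endomorphism algebras
  let Φ : A →ₐ[ℂ] ∀ c : Q, Module.End ℂ ↥(V c) :=
    Pi.algHom ℂ _ (fun c => Algebra.lsmul ℂ ℂ ↥(V c))
  have hinj : Function.Injective Φ := by
    rw [injective_iff_map_eq_zero]
    intro a ha
    have hann : ∀ (i : ↥s) (x : A), x ∈ (i : Submodule A A) → a * x = 0 := by
      intro i x hx
      obtain ⟨e⟩ := eRep i
      have h2 : (Algebra.lsmul ℂ ℂ ↥(V ⟦i⟧) a) (e ⟨x, hx⟩) = 0 := by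
        have h1 := congr_fun ha (⟦i⟧ : Q)
        rw [show Φ a ⟦i⟧ = Algebra.lsmul ℂ ℂ ↥(V ⟦i⟧) a from rfl] at h1
        rw [h1]; rfl
      have h3 : e (a • (⟨x, hx⟩ : ↥(i : Submodule A A))) = 0 := by
        rw [map_smul]; simpa using h2
      have h4 : a • (⟨x, hx⟩ : ↥(i : Submodule A A)) = 0 := by
        apply e.injective; simpa using h3
      have h5 := congr_arg Subtype.val h4
      simpa [smul_eq_mul] using h5
    have h1 : (1 : A) ∈ ⨆ i : ↥s, (i : Submodule A A) := htop ▸ Submodule.mem_top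
    have h2 : a * 1 = 0 := by
      refine Submodule.iSup_induction (motive := fun y => a * y = 0) _ h1 ?_ ?_ ?_
      · intro i x hx; exact hann i x hx
      · exact mul_zero a
      · intro x y hx hy; rw [mul_add, hx, hy, add_zero]
    simpa using h2
  haveI : FiniteDimensional ℂ (∀ c : Q, Module.End ℂ ↥(V c)) := inferInstance
  have hdim : finrank ℂ A = finrank ℂ (∀ c : Q, Module.End ℂ ↥(V c)) := by
    rw [hA, Module.finrank_pi_fintype ℂ, ← total]
    refine Finset.sum_congr rfl fun c _ => ?_
    exact (Module.finrank_linearMap ℂ ℂ ↥(V c) ↥(V c)).symm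
  have hsurj : Function.Surjective Φ :=
    (LinearMap.injective_iff_surjective_of_finrank_eq_finrank (f := Φ.toLinearMap) hdim).mp hinj
  let eAlg : A ≃ₐ[ℂ] ∀ c : Q, Module.End ℂ ↥(V c) := AlgEquiv.ofBijective Φ ⟨hinj, hsurj⟩
  let eMat : (∀ c : Q, Module.End ℂ ↥(V c)) ≃ₐ[ℂ] ∀ c : Q, Matrix (Fin (d c)) (Fin (d c)) ℂ :=
    AlgEquiv.piCongrRight fun c => algEquivMatrix (Module.finBasis ℂ ↥(V c))
  let σ : Q ≃ Fin (Fintype.card Q) := Fintype.equivFin Q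
  let dd : Fin (Fintype.card Q) → ℕ := fun i => d (σ.symm i)
  let eRe0 : (∀ c : Q, Matrix (Fin (d c)) (Fin (d c)) ℂ) ≃+*
      ∀ i : Fin (Fintype.card Q), Matrix (Fin (dd i)) (Fin (dd i)) ℂ :=
    RingEquiv.piCongrLeft' (fun c => Matrix (Fin (d c)) (Fin (d c)) ℂ) σ
  let eRe : (∀ c : Q, Matrix (Fin (d c)) (Fin (d c)) ℂ) ≃ₐ[ℂ]
      ∀ i : Fin (Fintype.card Q), Matrix (Fin (dd i)) (Fin (dd i)) ℂ :=
    AlgEquiv.ofRingEquiv (f := eRe0) (fun x => rfl)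
  exact ⟨Fintype.card Q, dd, hk, fun i => dle (σ.symm i), ⟨(eAlg.trans eMat).trans eRe⟩⟩

lemma RealizesAlgebra.congr' {n : ℕ} {c : Fin n → Fin n → Fin n → ℂ}
    {B : Type*} [Ring B] [Algebra ℂ B] {B' : Type*} [Ring B'] [Algebra ℂ B']
    (hB : RealizesAlgebra ℂ c B) (f : B ≃ₐ[ℂ] B') : RealizesAlgebra ℂ c B' := by
  obtain ⟨b, hb⟩ := hB
  refine ⟨b.map f.toLinearEquiv, fun i j => ?_⟩
  have h1 : f (b i * b j) = f (∑ l, c i j l • b l) := congrArg f (hb i j)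
  simpa [Basis.map_apply, map_mul, map_sum, map_smul] using h1

/-- if at arbitrarily small `s > 0` the specialisation `N_s` is defined and
semisimple, then the deformation is strongly flat to some semisimple `ℂ`-algebra `A'`
of dimension `n`. -/
theorem strongly_flat_of_semisimple_specialisations {n : ℕ} (hn : 1 ≤ n)
    (D : AnalyticDeformation n)
    (h : ∀ ε : ℝ, 0 < ε → ∃ s : ℝ, 0 < s ∧ s < ε ∧
      ∃ (B : Type) (_ : Ring B) (_ : Algebra ℂ B), IsSemisimpleRing B ∧ D.IsoAt s B) :
    ∃ (A' : Type) (_ : Ring A') (_ : Algebra ℂ A'),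
      IsSemisimpleRing A' ∧ FiniteDimensional ℂ A' ∧ Module.finrank ℂ A' = n ∧
        D.StronglyFlat A' := by
  classical
  have hc : ∀ j : ℕ, ∃ s : ℝ, 0 < s ∧ s < 1/(j+1) ∧ ∃ (B : Type) (_ : Ring B)
      (_ : Algebra ℂ B), IsSemisimpleRing B ∧ D.IsoAt s B :=
    fun j => h (1/(j+1)) (by positivity)
  choose sv hs1 hs2 B ringB algB ssB isoB using hc
  have hfd : ∀ j : ℕ, ∃ (k : ℕ) (dfn : Fin k → ℕ), k ≤ n ∧ (∀ i, dfn i ≤ n) ∧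
      Nonempty (B j ≃ₐ[ℂ] ∀ i : Fin k, Matrix (Fin (dfn i)) (Fin (dfn i)) ℂ) := by
    intro j
    obtain ⟨bas, hbas⟩ := (isoB j).2
    haveI : FiniteDimensional ℂ (B j) := Module.Finite.of_basis bas
    exact wedderburn_lite n (B j)
      ((Module.finrank_eq_card_basis bas).trans (Fintype.card_fin n))
  choose k dfn hk hd iso2 using hfd
  have inv_lt : ∀ j, k j < n + 1 := fun j => Nat.lt_succ_of_le (hk j)
  let inv : ℕ → (Σ kk : Fin (n+1), (Fin (kk : ℕ) → Fin (n+1))) := fun j =>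
    ⟨⟨k j, inv_lt j⟩, fun i => ⟨dfn j i, Nat.lt_succ_of_le (hd j i)⟩⟩
  obtain ⟨v, hv⟩ := Finite.exists_infinite_fiber inv
  refine ⟨∀ i : Fin (v.1 : ℕ), Matrix (Fin ((v.2 i : ℕ))) (Fin ((v.2 i : ℕ))) ℂ,
    inferInstance, inferInstance, ?_⟩
  have key : ∀ j : ℕ, inv j = v →
      Nonempty (B j ≃ₐ[ℂ] ∀ i : Fin (v.1 : ℕ), Matrix (Fin ((v.2 i : ℕ)))
        (Fin ((v.2 i : ℕ))) ℂ) := by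
    intro j hj
    subst hj
    exact iso2 j
  have hne : (inv ⁻¹' {v}).Nonempty := by
    rcases Set.infinite_coe_iff.mp hv with h'
    exact h'.nonempty
  obtain ⟨j₀, hj₀⟩ := hne
  obtain ⟨e₀⟩ := key j₀ hj₀
  have hreal : ∀ j : ℕ, inv j = v →
      RealizesAlgebra ℂ (fconst D.g (sv j)) (∀ i : Fin (v.1 : ℕ),
        Matrix (Fin ((v.2 i : ℕ))) (Fin ((v.2 i : ℕ))) ℂ) := by
    intro j hj
    obtain ⟨e⟩ := key j hj
    exact RealizesAlgebra.congr' (isoB j).2 e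
  refine ⟨?_, ?_, ?_, ?_⟩
  · haveI := ssB j₀
    exact e₀.toRingEquiv.isSemisimpleRing
  · obtain ⟨bas, -⟩ := hreal j₀ hj₀
    exact Module.Finite.of_basis bas
  · obtain ⟨bas, -⟩ := hreal j₀ hj₀
    exact (Module.finrank_eq_card_basis bas).trans (Fintype.card_fin n)
  · intro ε hε
    obtain ⟨N, hN⟩ := exists_nat_one_div_lt (K := ℝ) hε
    obtain ⟨j, hjmem, hjN⟩ := (Set.infinite_coe_iff.mp hv).exists_gt N
    refine ⟨sv j, hs1 j, ?_, (isoB j).1, hreal j hjmem⟩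
    calc sv j < 1/(j+1) := hs2 j
    _ ≤ 1/(N+1) := by
        apply one_div_le_one_div_of_le (by positivity)
        have : (N : ℝ) ≤ (j : ℝ) := by exact_mod_cast hjN.le
        linarith
    _ < ε := hN
end

section
/- Let g be an analytic formal deformation of dimension n with associated algebras N_s and N := N_0, let K be the field of fractions of the ring R̄ of power series convergent near 0, and let E be the associated K-algebra of dimension n. Suppose the deformation is strongly flat from N to a finite-dimensional semisimple ℂ-algebra A with dim_ℂ A = n. Then for every integer j ≥ 1, the dimension of I'_j(A) as a ℂ-vector space equals the dimension of I'_j(E) as a K-vector space. -/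
open scoped BigOperators

/-- The subring of `ℂ⟦t⟧` of power series with geometrically bounded coefficients,
i.e. the power series convergent on some interval containing `0`. -/
noncomputable def Rbar : Subring (PowerSeries ℂ) where
  carrier := {h | ∃ C r : ℝ, 0 < C ∧ 0 < r ∧
    ∀ m : ℕ, ‖(PowerSeries.coeff m) h‖ ≤ C * r ^ m}
  zero_mem' := ⟨1, 1, one_pos, one_pos, fun m => by simp⟩
  one_mem' := ⟨1, 1, one_pos, one_pos, fun m => by
    rw [PowerSeries.coeff_one]
    split <;> simp⟩
  add_mem' := by
    rintro a b ⟨C1, r1, hC1, hr1, h1⟩ ⟨C2, r2, hC2, hr2, h2⟩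
    refine ⟨C1 + C2, max r1 r2, by positivity, lt_max_of_lt_left hr1, fun m => ?_⟩
    have h1' : ‖(PowerSeries.coeff m) a‖ ≤ C1 * (max r1 r2) ^ m :=
      (h1 m).trans (by
        have := pow_le_pow_left₀ hr1.le (le_max_left r1 r2) m
        nlinarith)
    have h2' : ‖(PowerSeries.coeff m) b‖ ≤ C2 * (max r1 r2) ^ m :=
      (h2 m).trans (by
        have := pow_le_pow_left₀ hr2.le (le_max_right r1 r2) m
        nlinarith)
    calc ‖(PowerSeries.coeff m) (a + b)‖
        ≤ ‖(PowerSeries.coeff m) a‖ + ‖(PowerSeries.coeff m) b‖ := by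
          rw [map_add]; exact norm_add_le _ _
      _ ≤ C1 * (max r1 r2) ^ m + C2 * (max r1 r2) ^ m := add_le_add h1' h2'
      _ = (C1 + C2) * (max r1 r2) ^ m := by ring
  neg_mem' := by
    rintro a ⟨C, r, hC, hr, hb⟩
    exact ⟨C, r, hC, hr, fun m => by simpa using hb m⟩
  mul_mem' := by
    rintro a b ⟨C1, r1, hC1, hr1, h1⟩ ⟨C2, r2, hC2, hr2, h2⟩
    set R := max r1 r2 with hR
    have hRpos : 0 < R := lt_max_of_lt_left hr1
    refine ⟨C1 * C2, 2 * R, by positivity, by positivity, fun m => ?_⟩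
    have key : ∀ p ∈ Finset.HasAntidiagonal.antidiagonal m,
        ‖(PowerSeries.coeff p.1) a * (PowerSeries.coeff p.2) b‖ ≤ C1 * C2 * R ^ m := by
      rintro ⟨p, q⟩ hpq
      have hpq' : p + q = m := Finset.HasAntidiagonal.mem_antidiagonal.mp hpq
      have hp : ‖(PowerSeries.coeff p) a‖ ≤ C1 * R ^ p :=
        (h1 p).trans (by
          have := pow_le_pow_left₀ hr1.le (le_max_left r1 r2) p
          nlinarith)
      have hq : ‖(PowerSeries.coeff q) b‖ ≤ C2 * R ^ q :=
        (h2 q).trans (by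
          have := pow_le_pow_left₀ hr2.le (le_max_right r1 r2) q
          nlinarith)
      calc ‖(PowerSeries.coeff p) a * (PowerSeries.coeff q) b‖
          = ‖(PowerSeries.coeff p) a‖ * ‖(PowerSeries.coeff q) b‖ := norm_mul _ _
        _ ≤ (C1 * R ^ p) * (C2 * R ^ q) := by
            apply mul_le_mul hp hq (norm_nonneg _)
            positivity
        _ = C1 * C2 * R ^ (p + q) := by rw [pow_add]; ring
        _ = C1 * C2 * R ^ m := by rw [hpq']
    calc ‖(PowerSeries.coeff m) (a * b)‖
        = ‖∑ p ∈ Finset.HasAntidiagonal.antidiagonal m,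
            (PowerSeries.coeff p.1) a * (PowerSeries.coeff p.2) b‖ := by
          rw [PowerSeries.coeff_mul]
      _ ≤ ∑ p ∈ Finset.HasAntidiagonal.antidiagonal m,
            ‖(PowerSeries.coeff p.1) a * (PowerSeries.coeff p.2) b‖ :=
          norm_sum_le _ _
      _ ≤ ∑ _p ∈ Finset.HasAntidiagonal.antidiagonal m, C1 * C2 * R ^ m := Finset.sum_le_sum key
      _ = (m + 1 : ℝ) * (C1 * C2 * R ^ m) := by
          rw [Finset.sum_const, Finset.Nat.card_antidiagonal]
          ring
      _ ≤ (2 : ℝ) ^ m * (C1 * C2 * R ^ m) := by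
          have h2m : (m + 1 : ℝ) ≤ (2 : ℝ) ^ m := by
            have := Nat.lt_two_pow_self (n := m)
            have : (m + 1 : ℕ) ≤ 2 ^ m := this
            calc (m + 1 : ℝ) = ((m + 1 : ℕ) : ℝ) := by push_cast; ring
              _ ≤ ((2 ^ m : ℕ) : ℝ) := by exact_mod_cast this
              _ = (2 : ℝ) ^ m := by push_cast; ring
          have hpos : (0 : ℝ) ≤ C1 * C2 * R ^ m := by positivity
          nlinarith
      _ = C1 * C2 * (2 * R) ^ m := by rw [mul_pow]; ring

/-- `K`, the field of fractions of the ring of convergent power series. -/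
abbrev Kfield : Type := FractionRing Rbar

noncomputable example : Field Kfield := inferInstance

/-- The structure constants of `E`, viewed in `K`. -/
noncomputable def AnalyticDeformation.gK {n : ℕ} (D : AnalyticDeformation n) :
    Fin n → Fin n → Fin n → Kfield :=
  fun i j l => algebraMap Rbar Kfield ⟨D.g i j l, D.conv i j l⟩

/-- An evaluation of the standard polynomial of degree `2*j` in the ring `R`. -/
noncomputable def stdPolyEval (R : Type*) [Ring R] (j : ℕ) (x : Fin (2 * j) → R) : R :=
  ∑ σ : Equiv.Perm (Fin (2 * j)),
    (Equiv.Perm.sign σ : ℤ) • ((List.finRange (2 * j)).map fun i => x (σ i)).prod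

/-- `I'_j(R)`: the two-sided ideal of `R` generated by all evaluations of the standard
polynomial of degree `2*j`, realised as the `F`-linear span of `a * s_{2j}(x) * b`. -/
noncomputable def stdIdeal (F : Type*) [Field F] (R : Type*) [Ring R] [Algebra F R]
    (j : ℕ) : Submodule F R :=
  Submodule.span F {y : R | ∃ (a b : R) (x : Fin (2 * j) → R), y = a * stdPolyEval R j x * b}


/-- Series absolutely summable at `s`. -/
noncomputable def SummAt (s : ℝ) : Subring (PowerSeries ℂ) where
  carrier := {h | Summable fun m : ℕ => ‖(PowerSeries.coeff m) h * (s : ℂ) ^ m‖}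
  zero_mem' := by simp [summable_zero]
  one_mem' := by
    apply summable_of_ne_finset_zero (s := {0})
    intro m hm
    simp only [Finset.mem_singleton] at hm
    simp [PowerSeries.coeff_one, hm]
  add_mem' := by
    intro a b ha hb
    apply Summable.of_nonneg_of_le (fun m => norm_nonneg _) (fun m => ?_) (ha.add hb)
    rw [map_add, add_mul]
    exact norm_add_le _ _
  neg_mem' := by
    intro a ha
    simpa using ha
  mul_mem' := by
    intro a b ha hb
    have key := summable_norm_sum_mul_antidiagonal_of_summable_norm (f := fun m => (PowerSeries.coeff m) a * (s:ℂ)^m) (g := fun m => (PowerSeries.coeff m) b * (s:ℂ)^m) ha hb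
    apply key.congr
    intro m
    congr 1
    rw [PowerSeries.coeff_mul, Finset.sum_mul]
    apply Finset.sum_congr rfl
    rintro ⟨p, q⟩ hpq
    have : p + q = m := Finset.HasAntidiagonal.mem_antidiagonal.mp hpq
    subst this
    rw [pow_add]
    ring

/-- Evaluation at `s` as a ring hom on `SummAt s`. -/
noncomputable def evAt (s : ℝ) : SummAt s →+* ℂ where
  toFun h := ∑' m : ℕ, (PowerSeries.coeff m) (h : PowerSeries ℂ) * (s : ℂ) ^ m
  map_one' := by
    rw [tsum_eq_single 0]
    · simp
    · intro m hm; simp [PowerSeries.coeff_one, hm]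
  map_mul' := by
    rintro ⟨a, ha⟩ ⟨b, hb⟩
    simp only [Subring.coe_mul]
    rw [tsum_mul_tsum_eq_tsum_sum_antidiagonal_of_summable_norm ha hb]
    apply tsum_congr
    intro m
    rw [PowerSeries.coeff_mul, Finset.sum_mul]
    apply Finset.sum_congr rfl
    rintro ⟨p, q⟩ hpq
    have : p + q = m := Finset.HasAntidiagonal.mem_antidiagonal.mp hpq
    subst this
    rw [pow_add]
    ring
  map_zero' := by simp
  map_add' := by
    rintro ⟨a, ha⟩ ⟨b, hb⟩
    simp only [Subring.coe_add, map_add, add_mul]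
    exact Summable.tsum_add ha.of_norm hb.of_norm

lemma mem_summAt {h : PowerSeries ℂ} {C r s : ℝ} (hC : 0 < C) (hr : 0 < r)
    (hb : ∀ m, ‖(PowerSeries.coeff m) h‖ ≤ C * r ^ m) (hs : 0 ≤ s) (hsr : s * r < 1) :
    h ∈ SummAt s := by
  have : Summable fun m : ℕ => C * (s * r) ^ m :=
    (summable_geometric_of_lt_one (by positivity) hsr).mul_left C
  apply Summable.of_nonneg_of_le (fun m => norm_nonneg _) (fun m => ?_) this
  rw [norm_mul, norm_pow]
  have h1 : ‖(s : ℂ)‖ = s := by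
    rw [Complex.norm_real, Real.norm_of_nonneg hs]
  rw [h1]
  calc ‖(PowerSeries.coeff m) h‖ * s ^ m ≤ (C * r ^ m) * s ^ m := by
        apply mul_le_mul_of_nonneg_right (hb m) (by positivity)
    _ = C * (s * r) ^ m := by rw [mul_pow]; ring


lemma norm_coe_real_pow (s : ℝ) (hs : 0 ≤ s) (m : ℕ) : ‖(s:ℂ)^m‖ = s^m := by
  rw [norm_pow, Complex.norm_real, Real.norm_of_nonneg hs]

/-- A nonzero series with geometric coefficient bounds is nonvanishing at all
sufficiently small positive `s`. -/
lemma exists_eps_ev_ne_zero {h : PowerSeries ℂ} {C r : ℝ} (hC : 0 < C) (hr : 0 < r)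
    (hb : ∀ m, ‖(PowerSeries.coeff m) h‖ ≤ C * r ^ m) (hne : h ≠ 0) :
    ∃ ε : ℝ, 0 < ε ∧ ∀ s : ℝ, 0 < s → s < ε →
      Summable (fun m : ℕ => ‖(PowerSeries.coeff m) h * (s : ℂ) ^ m‖) ∧
      (∑' m : ℕ, (PowerSeries.coeff m) h * (s : ℂ) ^ m) ≠ 0 := by
  have hex : ∃ N, (PowerSeries.coeff N) h ≠ 0 := by
    by_contra hc
    push_neg at hc
    exact hne (PowerSeries.ext fun n => by simpa using hc n)
  classical
  set N := Nat.find hex with hN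
  have hcN : (PowerSeries.coeff N) h ≠ 0 := Nat.find_spec hex
  have hlow : ∀ m < N, (PowerSeries.coeff m) h = 0 := fun m hm => by
    by_contra hc; exact absurd (Nat.find_le hc) (not_le.mpr hm)
  have hcNpos : 0 < ‖(PowerSeries.coeff N) h‖ := norm_pos_iff.mpr hcN
  refine ⟨min (1/(2*r)) (‖(PowerSeries.coeff N) h‖ / (4 * C * r^(N+1))), by positivity, ?_⟩
  intro s hs hsε
  have hs1 : s < 1/(2*r) := lt_of_lt_of_le hsε (min_le_left _ _)
  have hs2 : s < ‖(PowerSeries.coeff N) h‖ / (4 * C * r^(N+1)) :=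
    lt_of_lt_of_le hsε (min_le_right _ _)
  have hsr : s * r < 1/2 := by
    rw [lt_div_iff₀ (by positivity : (0:ℝ) < 2*r)] at hs1
    nlinarith
  have hsr1 : s * r < 1 := by linarith
  -- summability
  have hsum : Summable (fun m : ℕ => ‖(PowerSeries.coeff m) h * (s : ℂ) ^ m‖) := by
    have : Summable fun m : ℕ => C * (s * r) ^ m :=
      (summable_geometric_of_lt_one (by positivity) hsr1).mul_left C
    apply Summable.of_nonneg_of_le (fun m => norm_nonneg _) (fun m => ?_) this
    rw [norm_mul, norm_coe_real_pow s hs.le]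
    calc ‖(PowerSeries.coeff m) h‖ * s ^ m ≤ (C * r ^ m) * s ^ m :=
          mul_le_mul_of_nonneg_right (hb m) (by positivity)
      _ = C * (s * r) ^ m := by rw [mul_pow]; ring
  refine ⟨hsum, ?_⟩
  have hsumm : Summable (fun m : ℕ => (PowerSeries.coeff m) h * (s : ℂ) ^ m) := hsum.of_norm
  -- split off the first N terms
  set a : ℕ → ℂ := fun m => (PowerSeries.coeff m) h * (s : ℂ) ^ m with ha
  have hsplit : (∑' m, a m) = ∑ i ∈ Finset.range N, a i + ∑' i, a (i + N) :=
    (Summable.sum_add_tsum_nat_add N hsumm).symm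
  have hzero : ∑ i ∈ Finset.range N, a i = 0 := by
    apply Finset.sum_eq_zero
    intro i hi
    rw [ha]
    simp [hlow i (Finset.mem_range.mp hi)]
  set b : ℕ → ℂ := fun i => (PowerSeries.coeff (i + N)) h * (s : ℂ) ^ i with hbdef
  have hab : ∀ i, a (i + N) = (s:ℂ)^N * b i := by
    intro i
    show (PowerSeries.coeff (i+N)) h * (s:ℂ)^(i+N) = (s:ℂ)^N * ((PowerSeries.coeff (i+N)) h * (s:ℂ)^i)
    rw [pow_add]
    ring
  have hsumb : Summable b := by
    have h1 : Summable (fun i => a (i + N)) := (summable_nat_add_iff N).mpr hsumm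
    have h2 : Summable (fun i => ((s:ℂ)^N)⁻¹ * a (i + N)) := h1.mul_left _
    apply h2.congr
    intro i
    rw [hab i]
    rw [inv_mul_cancel_left₀ (pow_ne_zero N (by exact_mod_cast hs.ne' : (s:ℂ) ≠ 0))]
  have htaileq : (∑' i, a (i + N)) = (s:ℂ)^N * ∑' i, b i := by
    rw [← tsum_mul_left]
    exact tsum_congr hab
  -- the series b has nonzero sum
  have hb0 : b 0 = (PowerSeries.coeff N) h := by simp [hbdef]
  have hbsplit : (∑' i, b i) = b 0 + ∑' i, b (i + 1) := by
    have := (Summable.sum_add_tsum_nat_add 1 hsumb).symm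
    simpa using this
  -- bound the tail
  have htail_bound : ‖∑' i, b (i + 1)‖ ≤ C * r^(N+1) * s * 2 := by
    have hg : Summable (fun i : ℕ => C * r^(N+1) * s * (s*r)^i) :=
      (summable_geometric_of_lt_one (by positivity) hsr1).mul_left _
    have hble : ∀ i, ‖b (i + 1)‖ ≤ C * r^(N+1) * s * (s*r)^i := by
      intro i
      show ‖(PowerSeries.coeff (i+1+N)) h * (s:ℂ)^(i+1)‖ ≤ _
      rw [norm_mul, norm_coe_real_pow s hs.le]
      calc ‖(PowerSeries.coeff (i + 1 + N)) h‖ * s ^ (i+1)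
          ≤ (C * r ^ (i + 1 + N)) * s ^ (i+1) :=
            mul_le_mul_of_nonneg_right (hb _) (by positivity)
        _ = C * r^(N+1) * s * (s*r)^i := by rw [pow_add, pow_add, pow_add]; ring
    calc ‖∑' i, b (i + 1)‖ ≤ ∑' i, ‖b (i + 1)‖ := by
          apply norm_tsum_le_tsum_norm
          apply Summable.of_nonneg_of_le (fun i => norm_nonneg _) hble hg
      _ ≤ ∑' i : ℕ, C * r^(N+1) * s * (s*r)^i := by
          apply Summable.tsum_le_tsum hble
            (Summable.of_nonneg_of_le (fun i => norm_nonneg _) hble hg) hg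
      _ = C * r^(N+1) * s * (1 - s*r)⁻¹ := by
          rw [tsum_mul_left, tsum_geometric_of_lt_one (by positivity) hsr1]
      _ ≤ C * r^(N+1) * s * 2 := by
          apply mul_le_mul_of_nonneg_left _ (by positivity)
          rw [inv_le_comm₀ (by linarith) (by norm_num)]
          linarith
  have hsmall : C * r^(N+1) * s * 2 < ‖(PowerSeries.coeff N) h‖ := by
    rw [lt_div_iff₀ (by positivity : (0:ℝ) < 4*C*r^(N+1))] at hs2
    nlinarith [pow_pos hr (N+1)]
  have hTne : (∑' i, b i) ≠ 0 := by
    rw [hbsplit, hb0]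
    intro hcontra
    have : ‖(PowerSeries.coeff N) h‖ = ‖∑' i, b (i + 1)‖ := by
      have : (∑' i, b (i+1)) = -(PowerSeries.coeff N) h := by linear_combination hcontra
      rw [this, norm_neg]
    linarith [htail_bound]
  rw [hsplit, hzero, zero_add, htaileq]
  exact mul_ne_zero (pow_ne_zero N (by exact_mod_cast hs.ne')) hTne

variable {n : ℕ}

/-- Coordinates of a product of basis vectors, in terms of structure constants. -/
noncomputable def prodCoords {R : Type*} [CommRing R] (c : Fin n → Fin n → Fin n → R) :
    List (Fin n) → Fin n → R
  | [] => fun _ => 0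
  | [i] => fun l => if i = l then 1 else 0
  | i :: p :: rest => fun l => ∑ l' : Fin n, prodCoords c (p :: rest) l' * c i l' l

lemma prodCoords_map {R S : Type*} [CommRing R] [CommRing S] (φ : R →+* S)
    (c : Fin n → Fin n → Fin n → R) (L : List (Fin n)) :
    ∀ l, prodCoords (fun i j l => φ (c i j l)) L l = φ (prodCoords c L l) := by
  induction L with
  | nil => intro l; simp [prodCoords]
  | cons i rest ih =>
    intro l
    cases rest with
    | nil => simp [prodCoords, apply_ite φ]
    | cons p rest' =>
      simp only [prodCoords, map_sum, map_mul]
      exact Finset.sum_congr rfl fun l' _ => by rw [ih l']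

/-- The universal coordinate matrix of the generators of `stdIdeal`. -/
noncomputable def Wmat {R : Type*} [CommRing R] (c : Fin n → Fin n → Fin n → R) (j : ℕ) :
    Matrix (Fin n) (Fin n × Fin n × (Fin (2 * j) → Fin n)) R :=
  fun l idx => ∑ σ : Equiv.Perm (Fin (2 * j)),
    (Equiv.Perm.sign σ : ℤ) •
      prodCoords c (idx.1 :: (((List.finRange (2 * j)).map fun i => idx.2.2 (σ i)) ++ [idx.2.1])) l

lemma Wmat_map {R S : Type*} [CommRing R] [CommRing S] (φ : R →+* S)
    (c : Fin n → Fin n → Fin n → R) (j : ℕ) :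
    Wmat (fun i j l => φ (c i j l)) j = (Wmat c j).map φ := by
  ext l idx
  simp only [Wmat, Matrix.map_apply, map_sum]
  exact Finset.sum_congr rfl fun σ _ => by
    rw [prodCoords_map φ, map_zsmul]

section Realized

variable {F B : Type*} [Field F] [Ring B] [Algebra F B]
variable (e : Module.Basis (Fin n) F B) (c : Fin n → Fin n → Fin n → F)
variable (hmul : ∀ i j, e i * e j = ∑ l, c i j l • e l)

lemma repr_listProd (hmul : ∀ i j, e i * e j = ∑ l, c i j l • e l)
    (L : List (Fin n)) (hL : L ≠ []) : ∀ l : Fin n,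
    e.repr ((L.map e).prod) l = prodCoords c L l := by
  induction L with
  | nil => exact absurd rfl hL
  | cons i rest ih =>
    intro l
    cases rest with
    | nil =>
      simp [prodCoords, Module.Basis.repr_self, Finsupp.single_apply]
    | cons p rest' =>
      have hP : ∀ l', e.repr (((p :: rest').map e).prod) l' = prodCoords c (p :: rest') l' :=
        ih (by simp)
      set P := ((p :: rest').map e).prod with hPdef
      have hexp : (((i :: p :: rest').map e).prod) = e i * P := by
        rw [List.map_cons, List.prod_cons]
      have hkey : e i * P = ∑ l' : Fin n, (e.repr P l') • ∑ m : Fin n, c i l' m • e m := by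
        conv_lhs => rw [← e.sum_repr P]
        rw [Finset.mul_sum]
        exact Finset.sum_congr rfl fun l' _ => by rw [mul_smul_comm, hmul]
      rw [hexp, hkey]
      rw [map_sum]
      rw [Finsupp.finset_sum_apply]
      have hterm : ∀ l' : Fin n,
          (e.repr ((e.repr P l') • ∑ m : Fin n, c i l' m • e m)) l
            = prodCoords c (p :: rest') l' * c i l' l := by
        intro l'
        rw [map_smul, map_sum]
        rw [Finsupp.smul_apply, Finsupp.finset_sum_apply]
        have h1 : ∀ m : Fin n, (e.repr (c i l' m • e m)) l = if m = l then c i l' m else 0 := by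
          intro m
          rw [map_smul, Finsupp.smul_apply, Module.Basis.repr_self, Finsupp.single_apply]
          simp [smul_eq_mul, mul_ite]
        rw [Finset.sum_congr rfl fun m _ => h1 m]
        rw [Finset.sum_ite_eq' (Finset.univ : Finset (Fin n)) l (fun m => c i l' m)]
        simp [hP l', smul_eq_mul]
      rw [Finset.sum_congr rfl fun l' _ => hterm l']
      simp [prodCoords]

end Realized

/-- The standard polynomial as a multilinear map. -/
noncomputable def stdML (F : Type*) [Field F] (B : Type*) [Ring B] [Algebra F B] (m : ℕ) :
    MultilinearMap F (fun _ : Fin m => B) B :=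
  ∑ σ : Equiv.Perm (Fin m),
    (Equiv.Perm.sign σ : ℤ) • (MultilinearMap.mkPiAlgebraFin F m B).domDomCongr σ

lemma stdML_apply (F : Type*) [Field F] (B : Type*) [Ring B] [Algebra F B] (j : ℕ)
    (x : Fin (2 * j) → B) : stdML F B (2 * j) x = stdPolyEval B j x := by
  simp only [stdML, stdPolyEval, MultilinearMap.sum_apply, MultilinearMap.smul_apply,
    MultilinearMap.domDomCongr_apply, MultilinearMap.mkPiAlgebraFin_apply]
  exact Finset.sum_congr rfl fun σ _ => by rw [List.ofFn_eq_map]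

section Realized2

variable {F B : Type*} [Field F] [Ring B] [Algebra F B]
variable (e : Module.Basis (Fin n) F B) (c : Fin n → Fin n → Fin n → F)

lemma repr_generator (hmul : ∀ i j, e i * e j = ∑ l, c i j l • e l) (j : ℕ)
    (p q : Fin n) (ι : Fin (2 * j) → Fin n) (l : Fin n) :
    e.repr (e p * stdPolyEval B j (fun i => e (ι i)) * e q) l = Wmat c j l (p, q, ι) := by
  have hterm : ∀ σ : Equiv.Perm (Fin (2 * j)),
      e p * (((List.finRange (2 * j)).map fun i => (fun i => e (ι i)) (σ i)).prod) * e q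
        = (((p :: (((List.finRange (2 * j)).map fun i => ι (σ i)) ++ [q])).map e).prod) := by
    intro σ
    rw [List.map_cons, List.prod_cons, List.map_append, List.prod_append, List.map_map,
      List.map_singleton, List.prod_singleton, mul_assoc]
    rfl
  rw [stdPolyEval, Finset.mul_sum, Finset.sum_mul]
  have hre : ∀ σ : Equiv.Perm (Fin (2 * j)),
      e p * ((Equiv.Perm.sign σ : ℤ) •
          ((List.finRange (2 * j)).map fun i => (fun i => e (ι i)) (σ i)).prod) * e q
        = (Equiv.Perm.sign σ : ℤ) •
            (((p :: (((List.finRange (2 * j)).map fun i => ι (σ i)) ++ [q])).map e).prod) := by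
    intro σ
    rw [mul_smul_comm, smul_mul_assoc, hterm σ]
  rw [Finset.sum_congr rfl fun σ _ => hre σ]
  rw [map_sum, Finsupp.finset_sum_apply]
  rw [Wmat]
  refine Finset.sum_congr rfl fun σ _ => ?_
  rw [map_zsmul, Finsupp.smul_apply]
  congr 1
  exact repr_listProd e c hmul _ (by simp) l

lemma stdIdeal_eq_span (j : ℕ) :
    stdIdeal F B j = Submodule.span F (Set.range fun idx : Fin n × Fin n × (Fin (2 * j) → Fin n) =>
      e idx.1 * stdPolyEval B j (fun i => e (idx.2.2 i)) * e idx.2.1) := by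
  apply le_antisymm
  · rw [stdIdeal]
    apply Submodule.span_le.mpr
    rintro y ⟨a, b, x, rfl⟩
    classical
    have hexp : stdPolyEval B j x
        = ∑ r : Fin (2 * j) → Fin n,
            (∏ i, e.repr (x i) (r i)) • stdPolyEval B j (fun i => e (r i)) := by
      rw [← stdML_apply F B j]
      have hx : x = fun i => ∑ t : Fin n, e.repr (x i) t • e t :=
        funext fun i => (e.sum_repr (x i)).symm
      conv_lhs => rw [hx]
      rw [MultilinearMap.map_sum]
      exact Finset.sum_congr rfl fun r _ => by
        rw [MultilinearMap.map_smul_univ, stdML_apply]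
    have h1 : a * stdPolyEval B j x * b
        = ∑ p : Fin n, e.repr a p • (e p * stdPolyEval B j x * b) := by
      conv_lhs => rw [← e.sum_repr a]
      rw [Finset.sum_mul, Finset.sum_mul]
      exact Finset.sum_congr rfl fun p _ => by rw [smul_mul_assoc, smul_mul_assoc]
    rw [h1]
    refine Submodule.sum_mem _ fun p _ => Submodule.smul_mem _ _ ?_
    have h2 : e p * stdPolyEval B j x * b
        = ∑ q : Fin n, e.repr b q • (e p * stdPolyEval B j x * e q) := by
      conv_lhs => rw [← e.sum_repr b]
      rw [Finset.mul_sum]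
      exact Finset.sum_congr rfl fun q _ => by rw [mul_smul_comm]
    rw [h2]
    refine Submodule.sum_mem _ fun q _ => Submodule.smul_mem _ _ ?_
    have h3 : e p * stdPolyEval B j x * e q
        = ∑ r : Fin (2 * j) → Fin n,
            (∏ i, e.repr (x i) (r i)) • (e p * stdPolyEval B j (fun i => e (r i)) * e q) := by
      rw [hexp, Finset.mul_sum, Finset.sum_mul]
      exact Finset.sum_congr rfl fun r _ => by rw [mul_smul_comm, smul_mul_assoc]
    rw [h3]
    exact Submodule.sum_mem _ fun r _ => Submodule.smul_mem _ _
      (Submodule.subset_span ⟨(p, q, r), rfl⟩)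
  · apply Submodule.span_le.mpr
    rintro y ⟨idx, rfl⟩
    exact Submodule.subset_span ⟨e idx.1, e idx.2.1, fun i => e (idx.2.2 i), rfl⟩

lemma finrank_stdIdeal_eq_rank (hmul : ∀ i j, e i * e j = ∑ l, c i j l • e l) (j : ℕ) :
    Module.finrank F (stdIdeal F B j) = (Wmat c j).rank := by
  classical
  rw [stdIdeal_eq_span e j, Matrix.rank_eq_finrank_span_cols]
  rw [← LinearEquiv.finrank_map_eq (e.equivFun : B ≃ₗ[F] (Fin n → F)), Submodule.map_span,
    ← Set.range_comp]
  have hfun : (⇑((e.equivFun : B ≃ₗ[F] (Fin n → F)) : B →ₗ[F] (Fin n → F)) ∘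
      fun idx : Fin n × Fin n × (Fin (2 * j) → Fin n) =>
        e idx.1 * stdPolyEval B j (fun i => e (idx.2.2 i)) * e idx.2.1)
      = fun idx => (Wmat c j).transpose idx := by
    funext idx
    funext l
    have := repr_generator e c hmul j idx.1 idx.2.1 idx.2.2 l
    simpa [Module.Basis.equivFun_apply, Matrix.transpose_apply] using this
  rw [hfun]
  rfl

end Realized2


open Matrix
section RankLemmas
variable {F : Type*} [Field F]

lemma rank_submatrix_le'' {m₁ n₁ m₂ n₂ : Type*} [Fintype m₁] [Fintype n₁] [Fintype m₂]
    [Fintype n₂] (M : Matrix m₁ n₁ F) (f : m₂ → m₁) (g : n₂ → n₁) :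
    (M.submatrix f g).rank ≤ M.rank := by
  rw [Matrix.rank_eq_finrank_span_cols, Matrix.rank_eq_finrank_span_cols]
  change Module.finrank F (Submodule.span F (Set.range (M.submatrix f g)ᵀ)) ≤
    Module.finrank F (Submodule.span F (Set.range Mᵀ))
  have hcols : Submodule.span F (Set.range (M.submatrix f g)ᵀ)
      = Submodule.map (LinearMap.funLeft F F f)
          (Submodule.span F (Set.range fun c => Mᵀ (g c))) := by
    rw [Submodule.map_span, ← Set.range_comp]
    rfl
  rw [hcols]
  calc Module.finrank F (Submodule.map (LinearMap.funLeft F F f)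
        (Submodule.span F (Set.range fun c => Mᵀ (g c))))
      ≤ Module.finrank F (Submodule.span F (Set.range fun c => Mᵀ (g c))) :=
        Submodule.finrank_map_le _ _
    _ ≤ Module.finrank F (Submodule.span F (Set.range Mᵀ)) := by
        apply Submodule.finrank_mono
        apply Submodule.span_mono
        rintro y ⟨c, rfl⟩
        exact ⟨g c, rfl⟩

lemma le_rank_of_det_ne_zero {m₁ n₁ : Type*} [Fintype m₁] [Fintype n₁] [DecidableEq m₁]
    [DecidableEq n₁] (M : Matrix m₁ n₁ F) {k : ℕ} (rs : Fin k → m₁) (cs : Fin k → n₁)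
    (h : (M.submatrix rs cs).det ≠ 0) : k ≤ M.rank := by
  have hu : IsUnit (M.submatrix rs cs) :=
    (Matrix.isUnit_iff_isUnit_det _).mpr (isUnit_iff_ne_zero.mpr h)
  obtain ⟨u, hu⟩ := hu
  have hr : (M.submatrix rs cs).rank = k := by
    have := Matrix.rank_unit (R := F) (n := Fin k) u
    rw [hu] at this
    simpa using this
  rw [← hr]
  exact rank_submatrix_le'' M rs cs

lemma exists_indep_selection {V ι : Type*} [AddCommGroup V] [Module F V]
    [FiniteDimensional F V] (v : ι → V) {k : ℕ}
    (hk : Module.finrank F (Submodule.span F (Set.range v)) = k) :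
    ∃ c : Fin k → ι, LinearIndependent F (v ∘ c) := by
  classical
  obtain ⟨b, hbsub, hspan, hind⟩ := exists_linearIndependent F (Set.range v)
  have hfin : b.Finite := hind.set_finite_of_isNoetherian
  haveI := hfin.fintype
  have hcard : Fintype.card b = k := by
    rw [← hk, ← hspan, finrank_span_set_eq_card hind, Set.toFinset_card]
  let eq1 : Fin k ≃ b := (Fintype.equivFinOfCardEq hcard).symm
  choose f hf using fun x : b => (hbsub x.2 : (x : V) ∈ Set.range v)
  refine ⟨fun i => f (eq1 i), ?_⟩
  have hcomp : v ∘ (fun i => f (eq1 i)) = (fun x : b => (x : V)) ∘ eq1 :=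
    funext fun i => hf (eq1 i)
  rw [hcomp]
  exact hind.comp eq1 eq1.injective

lemma exists_det_ne_zero_of_rank {m₁ n₁ : Type*} [Fintype m₁] [Fintype n₁] [DecidableEq m₁]
    [DecidableEq n₁] (M : Matrix m₁ n₁ F) :
    ∃ (rs : Fin M.rank → m₁) (cs : Fin M.rank → n₁), (M.submatrix rs cs).det ≠ 0 := by
  classical
  obtain ⟨cs, hcs⟩ := exists_indep_selection (v := Mᵀ) (Matrix.rank_eq_finrank_span_cols M).symm
  set M₁ : Matrix m₁ (Fin M.rank) F := M.submatrix id cs with hM₁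
  have hM₁t : M₁ᵀ = Mᵀ ∘ cs := by
    funext i l
    rfl
  have hrank₁ : M₁.rank = M.rank := by
    rw [Matrix.rank_eq_finrank_span_cols]
    change Module.finrank F (Submodule.span F (Set.range M₁ᵀ)) = _
    rw [hM₁t]
    rw [finrank_span_eq_card hcs, Fintype.card_fin]
  have hrank₁t : (M₁ᵀ).rank = M.rank := by rw [Matrix.rank_transpose, hrank₁]
  have hspanrows : Module.finrank F (Submodule.span F (Set.range fun x : m₁ => M₁ x))
      = M.rank := by
    have h2 : (M₁ᵀ)ᵀ = fun x : m₁ => M₁ x := by funext x l; rfl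
    rw [← h2]
    change Module.finrank F (Submodule.span F (Set.range (M₁ᵀ).col)) = _
    rw [← Matrix.rank_eq_finrank_span_cols, hrank₁t]
  obtain ⟨rs, hrs⟩ := exists_indep_selection (v := fun x : m₁ => M₁ x) hspanrows
  refine ⟨rs, cs, ?_⟩
  have hQ : M.submatrix rs cs = M₁.submatrix rs id := rfl
  have hrows : LinearIndependent F (fun i => (M₁.submatrix rs id) i) := by
    have : (fun i => (M₁.submatrix rs id) i) = (fun x : m₁ => M₁ x) ∘ rs := by
      funext i; rfl
    rw [this]
    exact hrs
  have hunit : IsUnit (M₁.submatrix rs id) :=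
    Matrix.linearIndependent_rows_iff_isUnit.mp hrows
  have hdet : IsUnit (M₁.submatrix rs id).det := (Matrix.isUnit_iff_isUnit_det _).mp hunit
  rw [hQ]
  exact hdet.ne_zero

end RankLemmas

set_option maxHeartbeats 2000000 in
/-- under a strongly flat deformation to a semisimple algebra `A`,
`dim_ℂ I'_j(A) = dim_K I'_j(E)` for every `j ≥ 1`. -/
theorem dim_stdIdeal_eq {n : ℕ} (hn : 1 ≤ n) (D : AnalyticDeformation n)
    (A : Type*) [Ring A] [Algebra ℂ A] [IsSemisimpleRing A] [FiniteDimensional ℂ A]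
    (hA : Module.finrank ℂ A = n) (hflat : D.StronglyFlat A)
    (E : Type*) [Ring E] [Algebra Kfield E]
    (hE : RealizesAlgebra Kfield D.gK E)
    (j : ℕ) (hj : 1 ≤ j) :
    Module.finrank ℂ (stdIdeal ℂ A j) = Module.finrank Kfield (stdIdeal Kfield E j) := by
  classical
  obtain ⟨eE, hEmul⟩ := hE
  have hEdim : Module.finrank Kfield (stdIdeal Kfield E j) = (Wmat D.gK j).rank :=
    finrank_stdIdeal_eq_rank eE D.gK hEmul j
  -- uniform coefficient bounds
  choose C r hC hr hb using D.conv
  set C0 : ℝ := 1 + ∑ i, ∑ jj, ∑ l, C i jj l with hC0def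
  set r0 : ℝ := 1 + ∑ i, ∑ jj, ∑ l, r i jj l with hr0def
  have hsum3 : ∀ (f : Fin n → Fin n → Fin n → ℝ), (∀ i jj l, 0 < f i jj l) →
      ∀ i jj l, f i jj l ≤ 1 + ∑ i', ∑ jj', ∑ l', f i' jj' l' := by
    intro f hf i jj l
    have h1 : f i jj l ≤ ∑ l', f i jj l' :=
      Finset.single_le_sum (f := fun l' => f i jj l') (fun _ _ => (hf i jj _).le)
        (Finset.mem_univ l)
    have h2 : (∑ l', f i jj l') ≤ ∑ jj', ∑ l', f i jj' l' :=
      Finset.single_le_sum (f := fun jj' => ∑ l', f i jj' l')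
        (fun _ _ => Finset.sum_nonneg fun _ _ => (hf _ _ _).le) (Finset.mem_univ jj)
    have h3 : (∑ jj', ∑ l', f i jj' l') ≤ ∑ i', ∑ jj', ∑ l', f i' jj' l' :=
      Finset.single_le_sum (f := fun i' => ∑ jj', ∑ l', f i' jj' l')
        (fun _ _ => Finset.sum_nonneg fun _ _ => Finset.sum_nonneg fun _ _ => (hf _ _ _).le)
        (Finset.mem_univ i)
    linarith
  have hC0pos : 0 < C0 := by
    have h0 : (0:ℝ) ≤ ∑ i, ∑ jj, ∑ l, C i jj l :=
      Finset.sum_nonneg fun _ _ => Finset.sum_nonneg fun _ _ =>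
        Finset.sum_nonneg fun _ _ => (hC _ _ _).le
    rw [hC0def]; linarith
  have hr0pos : 0 < r0 := by
    have h0 : (0:ℝ) ≤ ∑ i, ∑ jj, ∑ l, r i jj l :=
      Finset.sum_nonneg fun _ _ => Finset.sum_nonneg fun _ _ =>
        Finset.sum_nonneg fun _ _ => (hr _ _ _).le
    rw [hr0def]; linarith
  have hbound : ∀ i jj l m, ‖(PowerSeries.coeff m) (D.g i jj l)‖ ≤ C0 * r0 ^ m := by
    intro i jj l m
    refine (hb i jj l m).trans ?_
    have h1 : C i jj l ≤ C0 := hsum3 C hC i jj l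
    have h2 : r i jj l ^ m ≤ r0 ^ m :=
      pow_le_pow_left₀ (hr i jj l).le (hsum3 r hr i jj l) m
    exact mul_le_mul h1 h2 (pow_nonneg (hr i jj l).le m) hC0pos.le
  -- matrices over the subrings
  set cR : Fin n → Fin n → Fin n → Rbar := fun i jj l => ⟨D.g i jj l, D.conv i jj l⟩ with hcR
  have hgK : D.gK = fun i jj l => algebraMap Rbar Kfield (cR i jj l) := rfl
  have hWK : Wmat D.gK j = (Wmat cR j).map (algebraMap Rbar Kfield) := by
    rw [hgK]; exact Wmat_map (algebraMap Rbar Kfield) cR j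
  set d := (Wmat D.gK j).rank with hd
  obtain ⟨rs, cs, hdetK⟩ := exists_det_ne_zero_of_rank (Wmat D.gK j)
  set hR : Rbar := ((Wmat cR j).submatrix rs cs).det with hhR
  have hRK : algebraMap Rbar Kfield hR = ((Wmat D.gK j).submatrix rs cs).det := by
    rw [hhR, RingHom.map_det, RingHom.mapMatrix_apply, ← Matrix.submatrix_map, ← hWK]
  have hRne0 : hR ≠ 0 := by
    intro h0
    rw [h0, map_zero] at hRK
    exact hdetK hRK.symm
  have hRne : (hR : PowerSeries ℂ) ≠ 0 := fun h0 => hRne0 (Subtype.coe_injective (by simpa using h0))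
  obtain ⟨C', r', hC', hr', hb'⟩ := hR.2
  obtain ⟨ε, hεpos, hεprop⟩ := exists_eps_ev_ne_zero hC' hr' hb' hRne
  -- choose s via strong flatness
  obtain ⟨s, hspos, hslt, hdefined, eA, hAmul⟩ := hflat (min ε (1/(2*r0))) (by positivity)
  have hsε : s < ε := lt_of_lt_of_le hslt (min_le_left _ _)
  have hs2r : s < 1/(2*r0) := lt_of_lt_of_le hslt (min_le_right _ _)
  have hsr0 : s * r0 < 1 := by
    rw [lt_div_iff₀ (by positivity : (0:ℝ) < 2*r0)] at hs2r
    nlinarith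
  have memS : ∀ i jj l, D.g i jj l ∈ SummAt s :=
    fun i jj l => mem_summAt hC0pos hr0pos (hbound i jj l) hspos.le hsr0
  set cS : Fin n → Fin n → Fin n → SummAt s := fun i jj l => ⟨D.g i jj l, memS i jj l⟩ with hcS
  have hfc : fconst D.g s = fun i jj l => evAt s (cS i jj l) := rfl
  have hWs : Wmat (fconst D.g s) j = (Wmat cS j).map (evAt s) := by
    rw [hfc]; exact Wmat_map (evAt s) cS j
  have hAdim : Module.finrank ℂ (stdIdeal ℂ A j) = (Wmat (fconst D.g s) j).rank :=
    finrank_stdIdeal_eq_rank eA (fconst D.g s) hAmul j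
  have hdetEq : ∀ (k : ℕ) (rs' : Fin k → Fin n)
      (cs' : Fin k → Fin n × Fin n × (Fin (2 * j) → Fin n)),
      ((Wmat (fconst D.g s) j).submatrix rs' cs').det
        = evAt s (((Wmat cS j).submatrix rs' cs').det) := by
    intro k rs' cs'
    have h3 := RingHom.map_det (evAt s) ((Wmat cS j).submatrix rs' cs')
    rw [RingHom.mapMatrix_apply] at h3
    rw [hWs, Matrix.submatrix_map, ← h3]
  -- the two subring matrices agree as power series matrices
  have hsame : (Wmat cR j).map (Rbar.subtype) = (Wmat cS j).map ((SummAt s).subtype) := by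
    rw [← Wmat_map, ← Wmat_map]
    rfl
  have detcoe : ∀ (k : ℕ) (rs' : Fin k → Fin n)
      (cs' : Fin k → Fin n × Fin n × (Fin (2 * j) → Fin n)),
      (((Wmat cR j).submatrix rs' cs').det : PowerSeries ℂ)
        = (((Wmat cS j).submatrix rs' cs').det : PowerSeries ℂ) := by
    intro k rs' cs'
    have h1 := RingHom.map_det (Rbar.subtype) ((Wmat cR j).submatrix rs' cs')
    have h2 := RingHom.map_det ((SummAt s).subtype) ((Wmat cS j).submatrix rs' cs')
    rw [RingHom.mapMatrix_apply] at h1 h2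
    show Rbar.subtype _ = (SummAt s).subtype _
    rw [h1, h2, ← Matrix.submatrix_map, ← Matrix.submatrix_map, hsame]
  set hS : SummAt s := ((Wmat cS j).submatrix rs cs).det with hhS
  have hSev : evAt s hS ≠ 0 := by
    have hcoe : (hS : PowerSeries ℂ) = (hR : PowerSeries ℂ) := (detcoe d rs cs).symm
    have hval := (hεprop s hspos hsε).2
    show (∑' m : ℕ, (PowerSeries.coeff m) (hS : PowerSeries ℂ) * (s:ℂ)^m) ≠ 0
    rw [hcoe]; exact hval
  have hle1 : d ≤ (Wmat (fconst D.g s) j).rank := by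
    apply le_rank_of_det_ne_zero _ rs cs
    rw [hdetEq d rs cs]
    exact hSev
  have hle2 : (Wmat (fconst D.g s) j).rank ≤ d := by
    obtain ⟨rs', cs', hdet'⟩ := exists_det_ne_zero_of_rank (Wmat (fconst D.g s) j)
    apply le_rank_of_det_ne_zero _ rs' cs'
    set hS' : SummAt s := ((Wmat cS j).submatrix rs' cs').det with hhS'
    have hS'ne : hS' ≠ 0 := by
      intro h0
      apply hdet'
      rw [hdetEq _ rs' cs', ← hhS', h0, map_zero]
    have hR'ne : ((Wmat cR j).submatrix rs' cs').det ≠ 0 := by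
      intro h0
      apply hS'ne
      apply Subtype.coe_injective
      have hdc := detcoe _ rs' cs'
      rw [h0] at hdc
      simpa [hhS'] using hdc.symm
    have h4 := RingHom.map_det (algebraMap Rbar Kfield) ((Wmat cR j).submatrix rs' cs')
    rw [RingHom.mapMatrix_apply] at h4
    rw [hWK, Matrix.submatrix_map, ← h4]
    intro h0
    exact hR'ne (IsFractionRing.injective Rbar Kfield (by rw [h0, map_zero]))
  rw [hAdim, hEdim]
  exact le_antisymm hle2 hle1
end

section
/- Let g be an analytic formal deformation of dimension n with associated algebras N_s and N := N_0, and suppose the deformation is strongly flat from N to a finite-dimensional semisimple ℂ-algebra A with dim_ℂ A = n. Let W be a finite subset of the free algebra FreeAlgebra ℂ (Fin n), and let d : Fin n → N be the standard basis vectors of N (whose underlying space is Fin n → ℂ). Then for every real ε > 0 there exist a real s with 0 < s < ε (with N_s defined) and a tuple b : Fin n → N_s such that dim_ℂ T_N(d; W) ≤ dim_ℂ T_{N_s}(b; W). -/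
open scoped BigOperators

/-- `T_R(b; W)`: the `ℂ`-linear span in `R` of the images of the elements of `W` under
the algebra map `FreeAlgebra ℂ (Fin n) → R` sending the `i`-th generator to `b i`. -/
noncomputable def Tspan {n : ℕ} (R : Type*) [Ring R] [Algebra ℂ R] (b : Fin n → R)
    (W : Finset (FreeAlgebra ℂ (Fin n))) : Submodule ℂ R :=
  Submodule.span ℂ (⇑(FreeAlgebra.lift ℂ b) '' (W : Set (FreeAlgebra ℂ (Fin n))))

/-! ### Auxiliary definitions and lemmas -/

/-- Coordinates of the product of basis vectors along a word, expressed polynomially in the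
structure constants `c` (and the unit coordinates `u`). -/
noncomputable def wordVec {n : ℕ} (u : Fin n → ℂ) (c : Fin n → Fin n → Fin n → ℂ) :
    List (Fin n) → Fin n → ℂ
  | [] => u
  | i :: v => fun l => ∑ j, wordVec u c v j * c i j l

lemma continuous_wordVec {n : ℕ} (u : Fin n → ℂ) (v : List (Fin n)) (l : Fin n) :
    Continuous fun c : Fin n → Fin n → Fin n → ℂ => wordVec u c v l := by
  induction v generalizing l with
  | nil => simp only [wordVec]; exact continuous_const
  | cons i v ih =>
    simp only [wordVec]
    exact continuous_finset_sum _ fun j _ =>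
      (ih j).mul ((continuous_apply l).comp ((continuous_apply j).comp (continuous_apply i)))

/-- Coordinates of the image of `w` under the map sending generators to the basis vectors,
expressed polynomially in the structure constants. -/
noncomputable def coords {n : ℕ} (u : Fin n → ℂ) (c : Fin n → Fin n → Fin n → ℂ)
    (w : FreeAlgebra ℂ (Fin n)) (l : Fin n) : ℂ :=
  ((FreeAlgebra.equivMonoidAlgebraFreeMonoid (R := ℂ) (X := Fin n)) w).coeff.sum
    (fun v r => r * wordVec u c (FreeMonoid.toList v) l)

lemma continuous_coords {n : ℕ} (u : Fin n → ℂ) (w : FreeAlgebra ℂ (Fin n)) (l : Fin n) :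
    Continuous fun c : Fin n → Fin n → Fin n → ℂ => coords u c w l := by
  unfold coords Finsupp.sum
  exact continuous_finset_sum _ fun v _ => continuous_const.mul (continuous_wordVec u _ l)

section AlgebraLemmas
variable {n : ℕ} {B : Type*} [Ring B] [Algebra ℂ B] (e : Module.Basis (Fin n) ℂ B)
  {c : Fin n → Fin n → Fin n → ℂ} {u : Fin n → ℂ}

lemma one_eq_sum (hc : ∀ i j, e i * e j = ∑ l, c i j l • e l)
    (hcu : ∀ j l, ∑ i, u i * c i j l = if j = l then (1:ℂ) else 0) :
    (1 : B) = ∑ i, u i • e i := by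
  set v : B := ∑ i, u i • e i with hv
  have hve : ∀ j, v * e j = e j := by
    intro j
    calc v * e j = ∑ i, u i • (e i * e j) := by
          rw [hv, Finset.sum_mul]; simp [smul_mul_assoc]
      _ = ∑ i, u i • ∑ l, c i j l • e l := by simp_rw [hc]
      _ = ∑ l, (∑ i, u i * c i j l) • e l := by
          simp_rw [Finset.smul_sum, smul_smul]
          rw [Finset.sum_comm]
          simp [Finset.sum_smul]
      _ = e j := by
          simp_rw [hcu]
          simp [Finset.sum_ite_eq']
  have : (LinearMap.mulLeft ℂ v) = LinearMap.id := by
    apply e.ext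
    intro j
    simpa using hve j
  have h1 : v * (1 : B) = 1 := by
    have := congrArg (fun f => f (1:B)) this
    simpa using this
  simpa using h1.symm

lemma repr_wordProd (hc : ∀ i j, e i * e j = ∑ l, c i j l • e l)
    (hu : (1 : B) = ∑ i, u i • e i) (v : List (Fin n)) (l : Fin n) :
    e.repr ((v.map ⇑e).prod) l = wordVec u c v l := by
  induction v generalizing l with
  | nil =>
    simp only [List.map_nil, List.prod_nil, wordVec, hu]
    simp [Finsupp.single_apply, Finset.sum_ite_eq']
  | cons i v ih =>
    have hy : (((i :: v).map ⇑e).prod : B) = e i * ((v.map ⇑e).prod) := by simp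
    set y : B := (v.map ⇑e).prod with hydef
    have hrep : y = ∑ j, e.repr y j • e j := (e.sum_repr y).symm
    have step : e i * y = ∑ j, e.repr y j • (e i * e j) := by
      conv_lhs => rw [hrep]
      rw [Finset.mul_sum]; simp [mul_smul_comm]
    rw [hy, step]
    simp_rw [hc]
    simp only [map_sum, map_smul, Finsupp.coe_finset_sum, Finsupp.coe_smul,
      Finset.sum_apply, Pi.smul_apply, e.repr_self, smul_eq_mul]
    simp only [Finsupp.single_apply, mul_ite, mul_one, mul_zero]
    simp only [Finset.sum_ite_eq', Finset.mem_univ, if_true]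
    rw [show (wordVec u c (i :: v) l) = ∑ j, wordVec u c v j * c i j l from rfl]
    exact Finset.sum_congr rfl fun j _ => by rw [ih]

lemma lift_eq_monoidAlgebra (f : Fin n → B) (w : FreeAlgebra ℂ (Fin n)) :
    FreeAlgebra.lift ℂ f w =
      (MonoidAlgebra.lift ℂ B (FreeMonoid (Fin n)) (FreeMonoid.lift f))
        ((FreeAlgebra.equivMonoidAlgebraFreeMonoid (R := ℂ) (X := Fin n)) w) := by
  have : ((MonoidAlgebra.lift ℂ B (FreeMonoid (Fin n)) (FreeMonoid.lift f)).comp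
      (FreeAlgebra.equivMonoidAlgebraFreeMonoid (R := ℂ) (X := Fin n)).toAlgHom)
      = FreeAlgebra.lift ℂ f := by
    apply FreeAlgebra.hom_ext
    funext i
    simp [FreeAlgebra.equivMonoidAlgebraFreeMonoid]
  exact (congrArg (fun F => F w) this).symm

lemma coords_eq (hc : ∀ i j, e i * e j = ∑ l, c i j l • e l)
    (hu : (1 : B) = ∑ i, u i • e i) (w : FreeAlgebra ℂ (Fin n)) (l : Fin n) :
    e.repr ((FreeAlgebra.lift ℂ ⇑e) w) l = coords u c w l := by
  rw [lift_eq_monoidAlgebra ⇑e w, MonoidAlgebra.lift_apply]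
  rw [Finsupp.sum]
  simp only [map_sum, map_smul, Finsupp.coe_finset_sum, Finset.sum_apply, Finsupp.coe_smul,
    Pi.smul_apply, smul_eq_mul]
  unfold coords Finsupp.sum
  refine Finset.sum_congr rfl fun v _ => ?_
  congr 1
  have hlift : FreeMonoid.lift ⇑e v = ((FreeMonoid.toList v).map ⇑e).prod := by
    conv_lhs => rw [← FreeMonoid.ofList_toList v]
    rw [FreeMonoid.lift_ofList]
  rw [hlift, repr_wordProd e hc hu]

end AlgebraLemmas

section Specialize
variable {n : ℕ}

lemma definedAt_zero (D : AnalyticDeformation n) : D.DefinedAt 0 := by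
  intro i j l
  apply summable_of_ne_finset_zero (s := ({0} : Finset ℕ))
  intro m hm
  simp only [Finset.mem_singleton] at hm
  simp [zero_pow hm]

lemma fconst_zero (g : Fin n → Fin n → Fin n → PowerSeries ℂ) (i j l : Fin n) :
    fconst g 0 i j l = (PowerSeries.coeff 0) (g i j l) := by
  unfold fconst
  rw [tsum_eq_single 0]
  · simp
  · intro m hm; simp [zero_pow hm]

lemma sum_u_mul_fconst (D : AnalyticDeformation n) {s : ℝ} (hs : D.DefinedAt s) (j l : Fin n) :
    ∑ i, D.u i * fconst D.g s i j l = if j = l then (1:ℂ) else 0 := by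
  have h1 : ∀ i : Fin n,
      Summable fun m : ℕ => D.u i * ((PowerSeries.coeff m) (D.g i j l) * (s:ℂ)^m) :=
    fun i => (hs i j l).mul_left _
  calc ∑ i, D.u i * fconst D.g s i j l
      = ∑ i, ∑' m : ℕ, D.u i * ((PowerSeries.coeff m) (D.g i j l) * (s:ℂ)^m) := by
        refine Finset.sum_congr rfl fun i _ => ?_
        rw [tsum_mul_left]; rfl
    _ = ∑' m : ℕ, ∑ i, D.u i * ((PowerSeries.coeff m) (D.g i j l) * (s:ℂ)^m) :=
        (Summable.tsum_finsetSum fun i _ => h1 i).symm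
    _ = ∑' m : ℕ, (PowerSeries.coeff m) (∑ i, D.u i • D.g i j l) * (s:ℂ)^m := by
        refine tsum_congr fun m => ?_
        rw [map_sum]
        simp [Finset.sum_mul, mul_assoc]
    _ = if j = l then (1:ℂ) else 0 := by
        rw [D.unit_left j l]
        by_cases h : j = l
        · simp only [h, if_true]
          rw [tsum_eq_single 0]
          · simp
          · intro m hm; simp [PowerSeries.coeff_one, hm]
        · simp [h]

lemma exists_uniform_bound (D : AnalyticDeformation n) :
    ∃ C r : ℝ, 0 < C ∧ 0 < r ∧
      ∀ i j l m, ‖(PowerSeries.coeff m) (D.g i j l)‖ ≤ C * r ^ m := by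
  choose C r hC hr hb using D.conv
  have hCnn : ∀ i j l, (0:ℝ) ≤ C i j l := fun i j l => (hC i j l).le
  have hrnn : ∀ i j l, (0:ℝ) ≤ r i j l := fun i j l => (hr i j l).le
  have key : ∀ (f : Fin n → Fin n → Fin n → ℝ), (∀ i j l, 0 ≤ f i j l) →
      ∀ i j l, f i j l ≤ 1 + ∑ i', ∑ j', ∑ l', f i' j' l' := by
    intro f hf i j l
    have h1 : f i j l ≤ ∑ l', f i j l' :=
      Finset.single_le_sum (fun l' _ => hf i j l') (Finset.mem_univ l)
    have h2 : ∑ l', f i j l' ≤ ∑ j', ∑ l', f i j' l' :=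
      Finset.single_le_sum (f := fun j' => ∑ l', f i j' l')
        (fun j' _ => Finset.sum_nonneg fun l' _ => hf i j' l') (Finset.mem_univ j)
    have h3 : ∑ j', ∑ l', f i j' l' ≤ ∑ i', ∑ j', ∑ l', f i' j' l' :=
      Finset.single_le_sum (f := fun i' => ∑ j', ∑ l', f i' j' l')
        (fun i' _ => Finset.sum_nonneg fun j' _ => Finset.sum_nonneg fun l' _ => hf i' j' l')
        (Finset.mem_univ i)
    linarith
  have hCsum : (0:ℝ) ≤ ∑ i', ∑ j', ∑ l', C i' j' l' :=
    Finset.sum_nonneg fun i' _ => Finset.sum_nonneg fun j' _ =>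
      Finset.sum_nonneg fun l' _ => hCnn i' j' l'
  have hrsum : (0:ℝ) ≤ ∑ i', ∑ j', ∑ l', r i' j' l' :=
    Finset.sum_nonneg fun i' _ => Finset.sum_nonneg fun j' _ =>
      Finset.sum_nonneg fun l' _ => hrnn i' j' l'
  refine ⟨1 + ∑ i', ∑ j', ∑ l', C i' j' l', 1 + ∑ i', ∑ j', ∑ l', r i' j' l', ?_, ?_, ?_⟩
  · linarith
  · linarith
  · intro i j l m
    refine (hb i j l m).trans ?_
    have hCle := key C hCnn i j l
    have hrle := key r hrnn i j l
    have hrpow : r i j l ^ m ≤ (1 + ∑ i', ∑ j', ∑ l', r i' j' l') ^ m :=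
      pow_le_pow_left₀ (hrnn i j l) hrle m
    have hC0 : (0:ℝ) ≤ C i j l := hCnn i j l
    have hpow0 : (0:ℝ) ≤ r i j l ^ m := pow_nonneg (hrnn i j l) m
    calc C i j l * r i j l ^ m
        ≤ (1 + ∑ i', ∑ j', ∑ l', C i' j' l') * r i j l ^ m := by
          exact mul_le_mul_of_nonneg_right hCle hpow0
      _ ≤ (1 + ∑ i', ∑ j', ∑ l', C i' j' l') * (1 + ∑ i', ∑ j', ∑ l', r i' j' l') ^ m := by
          apply mul_le_mul_of_nonneg_left hrpow
          linarith

end Specialize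

section Cols
open Matrix
variable {n : ℕ}

lemma exists_cols {k : ℕ} (x : Fin k → (Fin n → ℂ)) (hx : LinearIndependent ℂ x) :
    ∃ cols : Fin k → Fin n, (Matrix.of fun a b => x a (cols b)).det ≠ 0 := by
  classical
  set A : Matrix (Fin k) (Fin n) ℂ := Matrix.of x with hA
  have hxA : LinearIndependent ℂ (fun a => A a) := hx
  have hrank : A.rank = k := by
    have := hxA.rank_matrix
    simpa using this
  have hspan : Module.finrank ℂ (Submodule.span ℂ (Set.range Aᵀ)) = k := by
    have := Matrix.rank_eq_finrank_span_cols A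
    rw [hrank] at this
    exact this.symm
  obtain ⟨b, hbsub, hbspan, hbli⟩ := exists_linearIndependent ℂ (Set.range Aᵀ)
  have hbfin : b.Finite := (Set.finite_range Aᵀ).subset hbsub
  haveI := hbfin.fintype
  have hcard : Fintype.card b = k := by
    rw [← Set.toFinset_card, ← finrank_span_set_eq_card hbli, hbspan, hspan]
  set eb := (Fintype.equivFinOfCardEq hcard).symm with heb
  set y : Fin k → (Fin k → ℂ) := fun a => ((eb a : b) : Fin k → ℂ) with hy
  have hyli : LinearIndependent ℂ y := hbli.comp eb eb.injective
  have hymem : ∀ a, ∃ j, Aᵀ j = y a := fun a => hbsub (eb a).2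
  choose cols hcols using hymem
  refine ⟨cols, ?_⟩
  have hMt : ∀ b', (Matrix.of fun a b'' => x a (cols b''))ᵀ b' = y b' := by
    intro b'
    funext a
    have := congrFun (hcols b') a
    exact this
  have hli : LinearIndependent ℂ (fun b' => (Matrix.of fun a b'' => x a (cols b''))ᵀ b') := by
    simp only [hMt]; exact hyli
  have hunit : IsUnit (Matrix.of fun a b'' => x a (cols b'')) :=
    Matrix.linearIndependent_cols_iff_isUnit.mp hli
  exact isUnit_iff_ne_zero.mp ((Matrix.isUnit_iff_isUnit_det _).mp hunit)

lemma rows_li_of_det {k : ℕ} (x : Fin k → (Fin n → ℂ)) (cols : Fin k → Fin n)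
    (h : (Matrix.of fun a b => x a (cols b)).det ≠ 0) : LinearIndependent ℂ x := by
  have hunit : IsUnit (Matrix.of fun a b => x a (cols b)) :=
    (Matrix.isUnit_iff_isUnit_det _).mpr (isUnit_iff_ne_zero.mpr h)
  have hrows : LinearIndependent ℂ (fun a => (Matrix.of fun a' b => x a' (cols b)) a) :=
    Matrix.linearIndependent_rows_iff_isUnit.mpr hunit
  apply LinearIndependent.of_comp (LinearMap.funLeft ℂ ℂ cols)
  exact hrows

end Cols

/-- for every `ε > 0` there are `0 < s < ε` and a tuple `b` in `N_s` with
`dim_ℂ T_N(d; W) ≤ dim_ℂ T_{N_s}(b; W)`, where `d` is the standard basis of `N = N_0`. -/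
theorem Tspan_dim_le {n : ℕ} (hn : 1 ≤ n) (D : AnalyticDeformation n)
    (A : Type*) [Ring A] [Algebra ℂ A] [IsSemisimpleRing A] [FiniteDimensional ℂ A]
    (hA : Module.finrank ℂ A = n) (hflat : D.StronglyFlat A)
    (W : Finset (FreeAlgebra ℂ (Fin n)))
    (N0 : Type*) [Ring N0] [Algebra ℂ N0] (d : Module.Basis (Fin n) ℂ N0)
    (hd : ∀ i j, d i * d j = ∑ l, fconst D.g 0 i j l • d l)
    (ε : ℝ) (hε : 0 < ε) :
    ∃ s : ℝ, 0 < s ∧ s < ε ∧ D.DefinedAt s ∧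
      ∀ (Ns : Type) [Ring Ns] [Algebra ℂ Ns], RealizesAlgebra ℂ (fconst D.g s) Ns →
        ∃ b : Fin n → Ns,
          Module.finrank ℂ (Tspan N0 (⇑d) W) ≤ Module.finrank ℂ (Tspan Ns b W) := by
  classical
  obtain ⟨C0, r0, hC0, hr0, hbd⟩ := exists_uniform_bound D
  set ρ : ℝ := 1 / (2 * r0) with hρdef
  have hρ : 0 < ρ := by positivity
  set cl : ℝ → ℝ := fun s => max (-ρ) (min s ρ) with hcldef
  have hclcont : Continuous cl := continuous_const.max (continuous_id.min continuous_const)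
  have hclabs : ∀ s, |cl s| ≤ ρ := by
    intro s
    rw [abs_le]
    constructor
    · exact le_max_left _ _
    · exact max_le (by linarith) (min_le_right _ _)
  have hcleq : ∀ s, 0 ≤ s → s ≤ ρ → cl s = s := by
    intro s h1 h2
    simp only [hcldef]
    rw [min_eq_left h2, max_eq_right (by linarith)]
  set ct : ℝ → (Fin n → Fin n → Fin n → ℂ) :=
    fun s i j l => ∑' m : ℕ, (PowerSeries.coeff m) (D.g i j l) * ((cl s : ℝ) : ℂ) ^ m with hct
  have hctcont : Continuous ct := by
    apply continuous_pi; intro i; apply continuous_pi; intro j; apply continuous_pi; intro l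
    apply continuous_tsum (u := fun m : ℕ => C0 * (1/2 : ℝ)^m)
    · intro m
      exact continuous_const.mul ((Complex.continuous_ofReal.comp hclcont).pow m)
    · exact (summable_geometric_of_lt_one (by norm_num) (by norm_num)).mul_left C0
    · intro m s
      rw [norm_mul, norm_pow, Complex.norm_real, Real.norm_eq_abs]
      calc ‖(PowerSeries.coeff m) (D.g i j l)‖ * |cl s| ^ m
          ≤ (C0 * r0 ^ m) * ρ ^ m := by
            apply mul_le_mul (hbd i j l m) (pow_le_pow_left₀ (abs_nonneg _) (hclabs s) m)
              (pow_nonneg (abs_nonneg _) m)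
            positivity
        _ = C0 * (r0 * ρ) ^ m := by rw [mul_pow]; ring
        _ = C0 * (1/2 : ℝ) ^ m := by
            congr 2
            rw [hρdef]
            field_simp
  have hcteq : ∀ s, 0 ≤ s → s ≤ ρ → ct s = fconst D.g s := by
    intro s h1 h2
    funext i j l
    simp only [hct, fconst, hcleq s h1 h2]
  have hct0 : ct 0 = fconst D.g 0 := hcteq 0 le_rfl hρ.le
  -- base point data
  have hdef0 : D.DefinedAt 0 := definedAt_zero D
  have hu0 : (1 : N0) = ∑ i, D.u i • d i := one_eq_sum d hd (sum_u_mul_fconst D hdef0)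
  -- pick a linearly independent spanning subset of the image of W in N0
  set S : Set N0 := ⇑(FreeAlgebra.lift ℂ ⇑d) '' (W : Set (FreeAlgebra ℂ (Fin n))) with hS
  obtain ⟨bs, hbsub, hbspan, hbli⟩ := exists_linearIndependent ℂ S
  have hbfin : bs.Finite := (W.finite_toSet.image _).subset hbsub
  haveI := hbfin.fintype
  set k := Module.finrank ℂ (Tspan N0 ⇑d W) with hk
  have hTspan : Tspan N0 ⇑d W = Submodule.span ℂ bs := by
    rw [Tspan, ← hS, ← hbspan]
  have hcardb : Fintype.card bs = k := by
    rw [hk, hTspan, ← Set.toFinset_card, finrank_span_set_eq_card hbli]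
  set eb := (Fintype.equivFinOfCardEq hcardb).symm with heb
  set t : Fin k → N0 := fun a => ((eb a : bs) : N0) with ht
  have htli : LinearIndependent ℂ t := hbli.comp eb eb.injective
  have hmem : ∀ a : Fin k, ∃ w, w ∈ (W : Set (FreeAlgebra ℂ (Fin n))) ∧
      FreeAlgebra.lift ℂ ⇑d w = t a := by
    intro a
    rcases hbsub (eb a).2 with ⟨w, hw1, hw2⟩
    exact ⟨w, hw1, hw2⟩
  choose wv hwvW hwvt using hmem
  -- coordinates at 0
  set x0 : Fin k → (Fin n → ℂ) := fun a j => coords D.u (fconst D.g 0) (wv a) j with hx0def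
  have hx0 : ∀ a j, x0 a j = d.repr (t a) j := by
    intro a j
    rw [← hwvt a]
    exact (coords_eq d hd hu0 (wv a) j).symm
  have hx0li : LinearIndependent ℂ x0 := by
    have h1 : LinearIndependent ℂ fun a => d.repr (t a) :=
      htli.map' (d.repr : N0 →ₗ[ℂ] (Fin n →₀ ℂ)) d.repr.ker
    have h2 : LinearIndependent ℂ
        fun a => (Finsupp.linearEquivFunOnFinite ℂ ℂ (Fin n)) (d.repr (t a)) :=
      h1.map' (Finsupp.linearEquivFunOnFinite ℂ ℂ (Fin n) : (Fin n →₀ ℂ) →ₗ[ℂ] (Fin n → ℂ))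
        (Finsupp.linearEquivFunOnFinite ℂ ℂ (Fin n)).ker
    convert h2 using 1
    funext a
    funext j
    exact hx0 a j
  obtain ⟨cols, hdet0⟩ := exists_cols x0 hx0li
  -- continuity of the determinant in the parameter s
  set G : ℝ → ℂ :=
    fun s => (Matrix.of fun a b => coords D.u (ct s) (wv a) (cols b)).det with hG
  have hGcont : Continuous G := by
    apply Continuous.matrix_det
    apply continuous_matrix
    intro a b
    exact (continuous_coords D.u (wv a) (cols b)).comp hctcont
  have hG0 : G 0 ≠ 0 := by
    have : G 0 = (Matrix.of fun a b => x0 a (cols b)).det := by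
      simp only [hG, hct0, hx0def]
    rw [this]
    exact hdet0
  have hopen : ∃ δ > 0, ∀ s' : ℝ, |s'| < δ → G s' ≠ 0 := by
    have h1 : IsOpen {s' : ℝ | G s' ≠ 0} := (isOpen_ne_fun hGcont continuous_const)
    rcases Metric.isOpen_iff.mp h1 0 hG0 with ⟨δ, hδ, hball⟩
    refine ⟨δ, hδ, fun s' hs' => ?_⟩
    exact hball (by simpa [Real.dist_eq] using hs')
  obtain ⟨δ, hδ, hball⟩ := hopen
  obtain ⟨s, hs0, hslt, hiso⟩ := hflat (min ε (min ρ δ)) (by positivity)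
  have hsε : s < ε := lt_of_lt_of_le hslt (min_le_left _ _)
  have hsρ : s ≤ ρ := ((lt_of_lt_of_le hslt ((min_le_right _ _).trans (min_le_left _ _)))).le
  have hsδ : s < δ := lt_of_lt_of_le hslt ((min_le_right _ _).trans (min_le_right _ _))
  have hdefs : D.DefinedAt s := hiso.1
  refine ⟨s, hs0, hsε, hdefs, ?_⟩
  rintro Ns _ _ ⟨e, he⟩
  refine ⟨⇑e, ?_⟩
  have hus : (1 : Ns) = ∑ i, D.u i • e i := one_eq_sum e he (sum_u_mul_fconst D hdefs)
  have hcs : ct s = fconst D.g s := hcteq s hs0.le hsρ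
  have hdet : (Matrix.of fun a b => coords D.u (fconst D.g s) (wv a) (cols b)).det ≠ 0 := by
    rw [← hcs]
    exact hball s (by rwa [abs_of_pos hs0])
  set xs : Fin k → (Fin n → ℂ) := fun a j => coords D.u (fconst D.g s) (wv a) j with hxs
  have hxsli : LinearIndependent ℂ xs := rows_li_of_det xs cols hdet
  have hLli : LinearIndependent ℂ fun a => FreeAlgebra.lift ℂ ⇑e (wv a) := by
    apply LinearIndependent.of_comp
      (((Finsupp.linearEquivFunOnFinite ℂ ℂ (Fin n) : (Fin n →₀ ℂ) →ₗ[ℂ] (Fin n → ℂ))).comp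
        (e.repr : Ns →ₗ[ℂ] (Fin n →₀ ℂ)))
    have : ((((Finsupp.linearEquivFunOnFinite ℂ ℂ (Fin n) : (Fin n →₀ ℂ) →ₗ[ℂ] (Fin n → ℂ))).comp
        (e.repr : Ns →ₗ[ℂ] (Fin n →₀ ℂ))) ∘ fun a => FreeAlgebra.lift ℂ ⇑e (wv a)) = xs := by
      funext a
      funext j
      simpa using coords_eq e he hus (wv a) j
    rw [this]
    exact hxsli
  haveI : FiniteDimensional ℂ Ns := Module.Finite.of_basis e
  have hsub : Submodule.span ℂ (Set.range fun a => FreeAlgebra.lift ℂ ⇑e (wv a))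
      ≤ Tspan Ns ⇑e W := by
    rw [Submodule.span_le]
    rintro _ ⟨a, rfl⟩
    exact Submodule.subset_span ⟨wv a, hwvW a, rfl⟩
  calc Module.finrank ℂ (Tspan N0 ⇑d W)
      = Module.finrank ℂ
          (Submodule.span ℂ (Set.range fun a => FreeAlgebra.lift ℂ ⇑e (wv a))) := by
        rw [finrank_span_eq_card hLli, Fintype.card_fin, hk]
    _ ≤ Module.finrank ℂ (Tspan Ns ⇑e W) := Submodule.finrank_mono hsub
end
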